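/- Let s = σ + it be a complex number with 0 < σ < 1 and |t| > 1. Then the function a ↦ F_s(a) is integrable on (0,1) and its Fourier coefficients satisfy: the k-th Fourier coefficient F̂_s(k) = ∫_0^1 F_s(a) e^{-2πika} da equals k^{-s} for every integer k ≥ 1, and equals 0 for every integer k ≤ 0. -/

import Mathlib

open MeasureTheory Complex Real Set Filter

namespace PZAux

noncomputable def z (a : ℝ) : ℂ := Complex.exp (2 * π * Complex.I * a)

noncomputable def E (a : ℝ) (N : ℕ) : ℂ := ∑ k ∈ Finset.Icc 1 N, z a ^ k

noncomputable def f (s : ℂ) (k : ℕ) : ℂ := (k : ℂ) ^ (-s)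

noncomputable def g (a : ℝ) (s : ℂ) (k : ℕ) : ℂ := E a (k + 1) * (f s (k + 1) - f s (k + 2))

noncomputable def G (a : ℝ) (s : ℂ) : ℂ := ∑' k, g a s k

noncomputable def T (a : ℝ) (s : ℂ) (N : ℕ) : ℂ := ∑ k ∈ Finset.Icc 1 N, z a ^ k * f s k

noncomputable def B (a : ℝ) : ℝ := 2 / ‖1 - z a‖ + 1

lemma abs_z (a : ℝ) : ‖z a‖ = 1 := by
  rw [z, Complex.norm_exp]
  have : (2 * ↑π * Complex.I * ↑a).re = 0 := by simp
  rw [this, Real.exp_zero]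

lemma norm_E_le (a : ℝ) (hz1 : z a ≠ 1) (N : ℕ) : ‖E a N‖ ≤ B a := by
  have h1 : E a N = (z a ^ (N + 1) - 1) / (z a - 1) - 1 := by
    rw [E, ← geom_sum_eq hz1 (N + 1)]
    have h2 : Finset.range (N + 1) = insert 0 (Finset.Icc 1 N) := by
      ext k; simp; omega
    rw [h2, Finset.sum_insert (by simp), pow_zero]
    ring
  rw [h1, B]
  have h3 : ‖1 - z a‖ ≠ 0 := by
    simpa [sub_eq_zero] using fun h => hz1 h.symm
  calc ‖(z a ^ (N + 1) - 1) / (z a - 1) - 1‖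
      ≤ ‖(z a ^ (N + 1) - 1) / (z a - 1)‖ + ‖(1:ℂ)‖ := norm_sub_le _ _
    _ ≤ 2 / ‖1 - z a‖ + 1 := by
        rw [norm_div, norm_one]
        gcongr
        · calc ‖z a ^ (N + 1) - 1‖ ≤ ‖z a ^ (N + 1)‖ + ‖(1:ℂ)‖ := norm_sub_le _ _
            _ = 2 := by rw [norm_pow, abs_z]; norm_num
        · rw [← norm_neg]; simp

lemma B_nonneg (a : ℝ) : 0 ≤ B a := by
  unfold B
  have : (0:ℝ) ≤ 2 / ‖1 - z a‖ := div_nonneg (by norm_num) (norm_nonneg _)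
  linarith

lemma E_succ (a : ℝ) (N : ℕ) : E a (N + 1) = E a N + z a ^ (N + 1) := by
  rw [E, E, Finset.sum_Icc_succ_top (by omega)]

lemma T_identity (a : ℝ) (s : ℂ) (N : ℕ) :
    T a s (N + 1) = E a (N + 1) * f s (N + 1) + ∑ k ∈ Finset.range N, g a s k := by
  induction N with
  | zero => simp [T, E, f, g]
  | succ N ih =>
    rw [T, Finset.sum_Icc_succ_top (by omega), ← T, ih, Finset.sum_range_succ, g,
      show z a ^ (N + 2) = E a (N + 2) - E a (N + 1) by rw [E_succ]; ring]
    ring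


lemma cpow_hasDerivAt {s : ℂ} (hs : s ≠ 0) {x : ℝ} (hx : 0 < x) :
    HasDerivAt (fun y : ℝ => (y : ℂ) ^ (-s)) (-s * (x : ℂ) ^ (-s - 1)) x := by
  have hr : -s - 1 ≠ -1 := fun h => hs (by linear_combination -h)
  have h := hasDerivAt_ofReal_cpow_const' hx.ne' hr
  rw [show -s - 1 + 1 = -s by ring] at h
  have h2 := h.const_mul (-s)
  have hfun : (fun y : ℝ => -s * ((y : ℂ) ^ (-s) / (-s))) = fun y : ℝ => (y : ℂ) ^ (-s) := by
    funext y
    field_simp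
  rwa [hfun] at h2

lemma cpow_sub_integral {s : ℂ} (hs : s ≠ 0) {c d : ℝ} (hc : 0 < c) (hcd : c ≤ d) :
    (d : ℂ) ^ (-s) - (c : ℂ) ^ (-s) = ∫ x in c..d, -s * (x : ℂ) ^ (-s - 1) := by
  rw [intervalIntegral.integral_eq_sub_of_hasDerivAt (f := fun y : ℝ => (y : ℂ) ^ (-s))]
  · intro x hx
    rw [uIcc_of_le hcd] at hx
    exact cpow_hasDerivAt hs (lt_of_lt_of_le hc hx.1)
  · apply ContinuousOn.intervalIntegrable
    apply continuousOn_const.mul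
    intro x hx
    rw [uIcc_of_le hcd] at hx
    exact (continuousAt_ofReal_cpow_const _ _ (Or.inr (lt_of_lt_of_le hc hx.1).ne')).continuousWithinAt

lemma norm_deriv_eq {s : ℂ} {x : ℝ} (hx : 0 < x) :
    ‖-s * (x : ℂ) ^ (-s - 1)‖ = ‖s‖ * x ^ (-s.re - 1) := by
  rw [norm_mul, norm_neg]
  rw [norm_cpow_eq_rpow_re_of_pos hx]
  norm_num

lemma norm_f_sub_le_tele {s : ℂ} (hσ : 0 < s.re) (k : ℕ) (hk : 1 ≤ k) :
    ‖f s k - f s (k + 1)‖ ≤ (‖s‖ / s.re) * ((k : ℝ) ^ (-s.re) - ((k : ℝ) + 1) ^ (-s.re)) := by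
  have hs : s ≠ 0 := fun h => by simp [h] at hσ
  have hk0 : (0 : ℝ) < (k : ℝ) := by exact_mod_cast hk
  have hkk : (k : ℝ) ≤ (k : ℝ) + 1 := by linarith
  rw [norm_sub_rev, f, f]
  have e1 : ((k + 1 : ℕ) : ℂ) = ((((k : ℝ) + 1) : ℝ) : ℂ) := by push_cast; ring
  have e2 : ((k : ℕ) : ℂ) = (((k : ℝ) : ℝ) : ℂ) := by push_cast; ring
  rw [e1, e2, cpow_sub_integral hs hk0 hkk]
  calc ‖∫ x in (k:ℝ)..((k:ℝ)+1), -s * (x : ℂ) ^ (-s - 1)‖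
      ≤ ∫ x in (k:ℝ)..((k:ℝ)+1), ‖-s * (x : ℂ) ^ (-s - 1)‖ :=
        intervalIntegral.norm_integral_le_integral_norm hkk
    _ = ∫ x in (k:ℝ)..((k:ℝ)+1), ‖s‖ * x ^ (-s.re - 1) := by
        apply intervalIntegral.integral_congr
        intro x hx
        rw [uIcc_of_le hkk] at hx
        exact norm_deriv_eq (lt_of_lt_of_le hk0 hx.1)
    _ = ‖s‖ * ∫ x in (k:ℝ)..((k:ℝ)+1), x ^ (-s.re - 1) := by
        rw [intervalIntegral.integral_const_mul]
    _ = ‖s‖ * ((((k : ℝ) + 1) ^ (-s.re) - (k : ℝ) ^ (-s.re)) / (-s.re)) := by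
        rw [integral_rpow (Or.inr ⟨by intro h; apply hσ.ne'; linarith,
          by rw [uIcc_of_le hkk]; intro h; exact absurd h.1 (by linarith)⟩)]
        rw [show -s.re - 1 + 1 = -s.re by ring]
    _ = (‖s‖ / s.re) * ((k : ℝ) ^ (-s.re) - ((k : ℝ) + 1) ^ (-s.re)) := by
        field_simp [hσ.ne']
        ring

lemma norm_f_sub_le_pointwise {s : ℂ} (hσ : 0 < s.re) (k : ℕ) (hk : 1 ≤ k) :
    ‖f s k - f s (k + 1)‖ ≤ ‖s‖ * (k : ℝ) ^ (-s.re - 1) := by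
  have hs : s ≠ 0 := fun h => by simp [h] at hσ
  have hk0 : (0 : ℝ) < (k : ℝ) := by exact_mod_cast hk
  have hkk : (k : ℝ) ≤ (k : ℝ) + 1 := by linarith
  rw [norm_sub_rev, f, f]
  have e1 : ((k + 1 : ℕ) : ℂ) = ((((k : ℝ) + 1) : ℝ) : ℂ) := by push_cast; ring
  have e2 : ((k : ℕ) : ℂ) = (((k : ℝ) : ℝ) : ℂ) := by push_cast; ring
  rw [e1, e2, cpow_sub_integral hs hk0 hkk]
  have := intervalIntegral.norm_integral_le_of_norm_le_const
    (a := (k:ℝ)) (b := (k:ℝ)+1) (C := ‖s‖ * (k : ℝ) ^ (-s.re - 1))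
    (f := fun x : ℝ => -s * (x : ℂ) ^ (-s - 1)) ?_
  · simpa using this
  · intro x hx
    rw [uIoc_of_le hkk] at hx
    rw [norm_deriv_eq (lt_trans hk0 hx.1)]
    exact mul_le_mul_of_nonneg_left
      (Real.rpow_le_rpow_of_nonpos hk0 hx.1.le (by linarith)) (norm_nonneg s)

noncomputable def u (s : ℂ) (k : ℕ) : ℝ := ((k : ℝ) + 1) ^ (-s.re)

lemma u_anti {s : ℂ} (hσ : 0 < s.re) (k : ℕ) : u s (k + 1) ≤ u s k := by
  apply Real.rpow_le_rpow_of_nonpos (by positivity) (by push_cast; linarith)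
    (by linarith)

lemma u_nonneg (s : ℂ) (k : ℕ) : 0 ≤ u s k := Real.rpow_nonneg (by positivity) _

lemma summable_tele {s : ℂ} (hσ : 0 < s.re) : Summable (fun k => u s k - u s (k + 1)) := by
  apply summable_of_sum_range_le (c := u s 0)
  · intro k; simpa using u_anti hσ k
  · intro n
    rw [Finset.sum_range_sub' (u s)]
    simpa using u_nonneg s n

lemma sum_Ico_tele (v : ℕ → ℝ) {m n : ℕ} (h : m ≤ n) :
    ∑ k ∈ Finset.Ico m n, (v k - v (k + 1)) = v m - v n := by
  rw [Finset.sum_Ico_eq_sub _ h, Finset.sum_range_sub' v, Finset.sum_range_sub' v]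
  ring

lemma norm_g_le {a : ℝ} {s : ℂ} (hz1 : z a ≠ 1) (hσ : 0 < s.re) (k : ℕ) :
    ‖g a s k‖ ≤ (B a * (‖s‖ / s.re)) * (u s k - u s (k + 1)) := by
  rw [g, norm_mul]
  have h1 := norm_E_le a hz1 (k + 1)
  have h2 := norm_f_sub_le_tele hσ (k + 1) (by omega)
  have h3 : ((k + 1 : ℕ) : ℝ) = (k : ℝ) + 1 := by push_cast; ring
  rw [h3] at h2
  have h4 : u s k - u s (k + 1) = ((k:ℝ) + 1) ^ (-s.re) - (((k:ℝ) + 1) + 1) ^ (-s.re) := by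
    rw [u, u]; push_cast; ring_nf
  rw [h4]
  calc ‖E a (k + 1)‖ * ‖f s (k + 1) - f s (k + 1 + 1)‖
      ≤ B a * ((‖s‖ / s.re) * (((k:ℝ) + 1) ^ (-s.re) - (((k:ℝ) + 1) + 1) ^ (-s.re))) := by
        apply mul_le_mul h1 h2 (norm_nonneg _) (B_nonneg a)
    _ = (B a * (‖s‖ / s.re)) * (((k:ℝ) + 1) ^ (-s.re) - (((k:ℝ) + 1) + 1) ^ (-s.re)) := by ring

lemma summable_g {a : ℝ} {s : ℂ} (hz1 : z a ≠ 1) (hσ : 0 < s.re) : Summable (g a s) :=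
  Summable.of_norm (((summable_tele hσ).mul_left _).of_nonneg_of_le
    (fun k => norm_nonneg _) (fun k => norm_g_le hz1 hσ k))

lemma norm_f {s : ℂ} (hσ : 0 < s.re) (N : ℕ) : ‖f s N‖ = (N : ℝ) ^ (-s.re) := by
  rcases Nat.eq_zero_or_pos N with h | h
  · subst h
    rw [f]
    simp only [Nat.cast_zero]
    rw [Complex.zero_cpow (by simpa using fun h => hσ.ne' (by rw [h]; simp)),
      Real.zero_rpow (by linarith)]
    simp
  · rw [f, ← Complex.ofReal_natCast,
      norm_cpow_eq_rpow_re_of_pos (by exact_mod_cast h)]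
    simp

lemma T_identity' (a : ℝ) (s : ℂ) (N : ℕ) :
    T a s N = E a N * f s N + ∑ k ∈ Finset.range (N - 1), g a s k := by
  cases N with
  | zero => simp [T, E]
  | succ N => rw [T_identity]; simp

lemma tendsto_T_G {a : ℝ} {s : ℂ} (hz1 : z a ≠ 1) (hσ : 0 < s.re) :
    Filter.Tendsto (T a s) Filter.atTop (nhds (G a s)) := by
  have h1 : Filter.Tendsto (fun N => ∑ k ∈ Finset.range (N - 1), g a s k)
      Filter.atTop (nhds (G a s)) :=
    ((summable_g hz1 hσ).hasSum.tendsto_sum_nat).comp (tendsto_sub_atTop_nat 1)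
  have h2 : Filter.Tendsto (fun N => E a N * f s N) Filter.atTop (nhds 0) := by
    apply squeeze_zero_norm (a := fun N : ℕ => B a * (N : ℝ) ^ (-s.re))
    · intro N
      rw [norm_mul, norm_f hσ]
      exact mul_le_mul_of_nonneg_right (norm_E_le a hz1 N) (Real.rpow_nonneg (by positivity) _)
    · have := (tendsto_rpow_neg_atTop hσ).comp
        (tendsto_natCast_atTop_atTop : Filter.Tendsto (Nat.cast : ℕ → ℝ) Filter.atTop Filter.atTop)
      simpa using this.const_mul (B a)
  have := h2.add h1
  rw [zero_add] at this
  apply this.congr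
  intro N
  rw [T_identity']

lemma T_eq_range {a : ℝ} {s : ℂ} (hs : s ≠ 0) (N : ℕ) :
    T a s N = ∑ k ∈ Finset.range (N + 1), z a ^ k * f s k := by
  have h2 : Finset.range (N + 1) = insert 0 (Finset.Icc 1 N) := by
    ext k; simp; omega
  rw [h2, Finset.sum_insert (by simp), T]
  have : f s 0 = 0 := by
    rw [f]
    push_cast
    exact Complex.zero_cpow (by simpa using hs)
  rw [this]
  simp

lemma tendsto_T_expZeta (a : ℝ) {s : ℂ} (hs : 1 < s.re) :
    Filter.Tendsto (T a s) Filter.atTop (nhds (HurwitzZeta.expZeta (a : UnitAddCircle) s)) := by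
  have h := HurwitzZeta.hasSum_expZeta_of_one_lt_re a hs
  have heq : ∀ n : ℕ, Complex.exp (2 * π * Complex.I * a * n) / (n : ℂ) ^ s
      = z a ^ n * f s n := by
    intro n
    rw [f, Complex.cpow_neg, z, ← Complex.exp_nat_mul, div_eq_mul_inv]
    ring_nf
  have h' := (h.congr_fun (fun n => (heq n).symm)).tendsto_sum_nat
  have := h'.comp (tendsto_add_atTop_nat 1)
  apply this.congr
  intro N
  exact (T_eq_range (by intro h0; rw [h0] at hs; norm_num at hs) N).symm

lemma z_ne_one {a : ℝ} (ha : a ∈ Set.Ioo (0:ℝ) 1) : z a ≠ 1 := by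
  rw [z]
  intro h
  rw [Complex.exp_eq_one_iff] at h
  obtain ⟨n, hn⟩ := h
  have : (a : ℂ) = (n : ℂ) := by
    have h2 : (2 * (π:ℂ) * Complex.I : ℂ) ≠ 0 := by
      simp [Complex.I_ne_zero, Real.pi_ne_zero]
    apply mul_left_cancel₀ h2
    linear_combination hn
  have : a = (n : ℝ) := by exact_mod_cast this
  rcases ha with ⟨h0, h1⟩
  rw [this] at h0 h1
  have : (0:ℤ) < n := by exact_mod_cast h0
  have : (n:ℤ) < 1 := by exact_mod_cast h1
  omega

lemma coe_ne_zero {a : ℝ} (ha : a ∈ Set.Ioo (0:ℝ) 1) : (a : UnitAddCircle) ≠ 0 := by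
  intro h
  rw [AddCircle.coe_eq_zero_iff] at h
  obtain ⟨n, hn⟩ := h
  rw [zsmul_eq_mul, mul_one] at hn
  rcases ha with ⟨h0, h1⟩
  rw [← hn] at h0 h1
  have : (0:ℤ) < n := by exact_mod_cast h0
  have : (n:ℤ) < 1 := by exact_mod_cast h1
  omega

lemma differentiableOn_G {a : ℝ} (hz1 : z a ≠ 1) :
    DifferentiableOn ℂ (G a) {s : ℂ | 0 < s.re} := by
  intro s₀ hs₀
  obtain ⟨R, hR⟩ := exists_nat_gt (max (1 / s₀.re) ‖s₀‖)
  have hR1 : (0:ℝ) < R := lt_of_le_of_lt (norm_nonneg s₀) (lt_of_le_of_lt (le_max_right _ _) hR)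
  have hRσ : 1 / (R:ℝ) < s₀.re := by
    have h1 : 1 / s₀.re < R := lt_of_le_of_lt (le_max_left _ _) hR
    rw [div_lt_iff₀ hR1]
    have hσ0 : 0 < s₀.re := hs₀
    rw [div_lt_iff₀ hσ0] at h1
    linarith [h1]
  have hRs : ‖s₀‖ < R := lt_of_le_of_lt (le_max_right _ _) hR
  set U : Set ℂ := {s : ℂ | 1 / (R:ℝ) < s.re} ∩ Metric.ball 0 R with hU
  have hUopen : IsOpen U := (isOpen_lt continuous_const Complex.continuous_re).inter
    Metric.isOpen_ball
  have hmem : s₀ ∈ U := ⟨hRσ, by simpa [Metric.mem_ball, dist_eq_norm] using hRs⟩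
  have hdiff : DifferentiableOn ℂ (fun w => ∑' k, g a w k) U := by
    apply differentiableOn_tsum_of_summable_norm
      (u := fun k : ℕ => B a * ((R:ℝ) * ((k : ℝ) + 1) ^ (-(1 / (R:ℝ)) - 1)))
    · apply Summable.mul_left
      apply Summable.mul_left
      have hp : Summable (fun n : ℕ => (n : ℝ) ^ (-(1 / (R:ℝ)) - 1)) := by
        rw [Real.summable_nat_rpow]
        have : 0 < 1 / (R:ℝ) := by positivity
        linarith
      have := (summable_nat_add_iff 1).mpr hp
      apply this.congr
      intro n
      push_cast
      ring_nf
    · intro k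
      apply DifferentiableOn.const_mul
      apply DifferentiableOn.sub
      · apply Differentiable.differentiableOn
        exact Differentiable.const_cpow differentiable_neg
          (Or.inl (by exact_mod_cast Nat.succ_ne_zero k))
      · apply Differentiable.differentiableOn
        exact Differentiable.const_cpow differentiable_neg
          (Or.inl (by push_cast; exact_mod_cast Nat.succ_ne_zero (k+1)))
    · exact hUopen
    · intro k w hw
      obtain ⟨hw1, hw2⟩ := hw
      have hwσ : 0 < w.re := lt_trans (by positivity) hw1
      have hwn : ‖w‖ ≤ R := le_of_lt (by simpa [Metric.mem_ball, dist_eq_norm] using hw2)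
      rw [g, norm_mul]
      have h1 := norm_E_le a hz1 (k + 1)
      have h2 := norm_f_sub_le_pointwise hwσ (k + 1) (by omega)
      have h3 : ((k + 1 : ℕ) : ℝ) = (k : ℝ) + 1 := by push_cast; ring
      rw [h3] at h2
      have h4 : ‖w‖ * ((k:ℝ) + 1) ^ (-w.re - 1) ≤ (R:ℝ) * ((k : ℝ) + 1) ^ (-(1 / (R:ℝ)) - 1) := by
        apply mul_le_mul hwn _ (Real.rpow_nonneg (by positivity) _) (by positivity)
        apply Real.rpow_le_rpow_of_exponent_le (by push_cast; linarith)
        have : 1 / (R:ℝ) < w.re := hw1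
        linarith
      exact mul_le_mul h1 (le_trans h2 h4) (norm_nonneg _) (B_nonneg a)
  have : DifferentiableOn ℂ (G a) U := by
    apply hdiff.congr
    intro w _
    rfl
  exact (this.differentiableAt (hUopen.mem_nhds hmem)).differentiableWithinAt

lemma expZeta_eq_G {a : ℝ} (ha : a ∈ Set.Ioo (0:ℝ) 1) {s : ℂ} (hσ : 0 < s.re) :
    HurwitzZeta.expZeta (a : UnitAddCircle) s = G a s := by
  have hz1 := z_ne_one ha
  have ha0 := coe_ne_zero ha
  set Uh : Set ℂ := {s : ℂ | 0 < s.re} with hUh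
  have hUopen : IsOpen Uh := isOpen_lt continuous_const Complex.continuous_re
  have hUconn : IsPreconnected Uh := (convex_halfSpace_re_gt 0).isPreconnected
  have hG_an : AnalyticOnNhd ℂ (G a) Uh := (differentiableOn_G hz1).analyticOnNhd hUopen
  have hE_an : AnalyticOnNhd ℂ (fun w => HurwitzZeta.expZeta (a : UnitAddCircle) w) Uh :=
    ((HurwitzZeta.differentiable_expZeta_of_ne_zero ha0).differentiableOn).analyticOnNhd hUopen
  have h2 : (2:ℂ) ∈ Uh := by norm_num [hUh]
  have hev : (fun w => HurwitzZeta.expZeta (a : UnitAddCircle) w) =ᶠ[nhds 2] G a := by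
    have hopen : IsOpen {w : ℂ | 1 < w.re} := isOpen_lt continuous_const Complex.continuous_re
    have hmem : {w : ℂ | 1 < w.re} ∈ nhds (2:ℂ) := hopen.mem_nhds (by norm_num)
    filter_upwards [hmem] with w hw
    exact tendsto_nhds_unique (tendsto_T_expZeta a hw) (tendsto_T_G hz1 (by
      have : (1:ℝ) < w.re := hw
      linarith))
  exact AnalyticOnNhd.eqOn_of_preconnected_of_eventuallyEq hE_an hG_an hUconn h2 hev hσ

lemma sin_ge_double {x : ℝ} (h0 : 0 ≤ x) (h2 : x ≤ 1/2) : 2 * x ≤ Real.sin (π * x) := by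
  have := Real.mul_le_sin (x := π * x) (by positivity)
    (by nlinarith [Real.pi_pos])
  calc 2 * x = 2 / π * (π * x) := by field_simp
    _ ≤ Real.sin (π * x) := this

lemma sin_lower {a : ℝ} (ha : a ∈ Set.Ioo (0:ℝ) 1) : 2 * min a (1 - a) ≤ Real.sin (π * a) := by
  rcases le_total a (1/2) with h | h
  · rw [min_eq_left (by linarith)]
    exact sin_ge_double ha.1.le h
  · rw [min_eq_right (by linarith)]
    have : Real.sin (π * a) = Real.sin (π * (1 - a)) := by
      rw [show π * (1 - a) = π - π * a by ring, Real.sin_pi_sub]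
    rw [this]
    exact sin_ge_double (by linarith [ha.2]) (by linarith)

lemma sin_pi_mul_pos {a : ℝ} (ha : a ∈ Set.Ioo (0:ℝ) 1) : 0 < Real.sin (π * a) := by
  have := sin_lower ha
  have h1 : 0 < min a (1 - a) := lt_min ha.1 (by linarith [ha.2])
  linarith

lemma norm_one_sub_z {a : ℝ} (ha : a ∈ Set.Ioo (0:ℝ) 1) :
    ‖1 - z a‖ = 2 * Real.sin (π * a) := by
  have hz : z a = Complex.cos (2 * π * a) + Complex.sin (2 * π * a) * Complex.I := by
    rw [z, ← Complex.exp_mul_I]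
    ring_nf
  have h1 : (1 : ℂ) - z a = ((1 - Real.cos (2 * π * a) : ℝ) : ℂ)
      + ((- Real.sin (2 * π * a) : ℝ) : ℂ) * Complex.I := by
    rw [hz]
    push_cast
    ring
  rw [h1, Complex.norm_add_mul_I]
  have hsin : Real.sin (π * a) = Real.sqrt ((1 - Real.cos (2 * π * a)) / 2) := by
    have := Real.sin_half_eq_sqrt (x := 2 * π * a) (by nlinarith [Real.pi_pos, ha.1])
      (by nlinarith [Real.pi_pos, ha.2])
    rw [show 2 * π * a / 2 = π * a by ring] at this
    exact this
  rw [hsin]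
  rw [show (2:ℝ) * Real.sqrt ((1 - Real.cos (2 * π * a)) / 2)
      = Real.sqrt (2 ^ 2 * ((1 - Real.cos (2 * π * a)) / 2)) by
    rw [Real.sqrt_mul (by norm_num), Real.sqrt_sq (by norm_num)]]
  congr 1
  have := Real.sin_sq_add_cos_sq (2 * π * a)
  nlinarith [this]

lemma B_le {a : ℝ} (ha : a ∈ Set.Ioo (0:ℝ) 1) :
    B a ≤ 1 / Real.sin (π * a) + 1 := by
  rw [B, norm_one_sub_z ha]
  have h := sin_pi_mul_pos ha
  have heq : 2 / (2 * Real.sin (π * a)) = 1 / Real.sin (π * a) := by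
    field_simp
  rw [heq]

lemma sum_rpow_le {σ : ℝ} (hσ0 : 0 < σ) (hσ1 : σ < 1) (M : ℕ) :
    ∑ k ∈ Finset.Icc 1 M, (k : ℝ) ^ (-σ) ≤ (M : ℝ) ^ (1 - σ) / (1 - σ) := by
  have key : ∀ k : ℕ, ((k + 1 : ℕ) : ℝ) ^ (-σ) ≤ ∫ x in (k : ℝ)..((k : ℝ) + 1), x ^ (-σ) := by
    intro k
    have hii : IntervalIntegrable (fun x : ℝ => x ^ (-σ)) volume (k : ℝ) ((k : ℝ) + 1) :=
      intervalIntegral.intervalIntegrable_rpow' (by linarith)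
    have hle : (k : ℝ) ≤ (k : ℝ) + 1 := by linarith
    rw [intervalIntegral.integral_of_le hle]
    have h0 : ((k + 1 : ℕ) : ℝ) ^ (-σ)
        = ∫ _ in Set.Ioc (k : ℝ) ((k : ℝ) + 1), ((k + 1 : ℕ) : ℝ) ^ (-σ) := by
      rw [setIntegral_const, measureReal_def, Real.volume_Ioc, show ((k:ℝ) + 1) - (k:ℝ) = 1 by ring,
        ENNReal.ofReal_one, ENNReal.toReal_one, one_smul]
    rw [h0]
    apply setIntegral_mono_on
    · exact (integrableOn_const (by simp [Real.volume_Ioc]))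
    · exact hii.1
    · exact measurableSet_Ioc
    · intro x hx
      apply Real.rpow_le_rpow_of_nonpos (lt_of_le_of_lt (Nat.cast_nonneg k) hx.1)
        (by push_cast; linarith [hx.2]) (by linarith)
  have hIcc : ∑ k ∈ Finset.Icc 1 M, (k : ℝ) ^ (-σ)
      = ∑ k ∈ Finset.range M, ((k + 1 : ℕ) : ℝ) ^ (-σ) := by
    rw [← Finset.Ico_add_one_right_eq_Icc, Finset.sum_Ico_eq_sum_range]
    apply Finset.sum_congr (by congr 1)
    intro k _
    congr 1
    push_cast
    ring
  rw [hIcc]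
  have hint : ∀ k : ℕ, IntervalIntegrable (fun x : ℝ => x ^ (-σ)) volume (k : ℝ) ((k+1 : ℕ) : ℝ) := by
    intro k
    exact intervalIntegral.intervalIntegrable_rpow' (by linarith)
  calc ∑ k ∈ Finset.range M, ((k + 1 : ℕ) : ℝ) ^ (-σ)
      ≤ ∑ k ∈ Finset.range M, ∫ x in ((k:ℕ) : ℝ)..(((k+1:ℕ)) : ℝ), x ^ (-σ) := by
        apply Finset.sum_le_sum
        intro k _
        have := key k
        simpa using this
    _ = ∫ x in ((0:ℕ) : ℝ)..((M:ℕ) : ℝ), x ^ (-σ) := by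
        apply intervalIntegral.sum_integral_adjacent_intervals (a := fun k : ℕ => (k : ℝ))
        intro k _
        exact hint k
    _ ≤ (M : ℝ) ^ (1 - σ) / (1 - σ) := by
        rw [integral_rpow (Or.inl (by linarith))]
        rw [show -σ + 1 = 1 - σ by ring]
        simp only [Nat.cast_zero]
        rw [Real.zero_rpow (by linarith)]
        simp

lemma norm_T_sub_le {a : ℝ} {s : ℂ} (hz1 : z a ≠ 1) (hσ : 0 < s.re) {M N : ℕ}
    (h1M : 1 ≤ M) (hMN : M ≤ N) :
    ‖T a s N - T a s M‖ ≤ B a * ((N:ℝ) ^ (-s.re) + (M:ℝ) ^ (-s.re)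
      + (‖s‖ / s.re) * (M:ℝ) ^ (-s.re)) := by
  have hident : T a s N - T a s M = E a N * f s N - E a M * f s M
      + ∑ k ∈ Finset.Ico (M - 1) (N - 1), g a s k := by
    rw [T_identity' a s N, T_identity' a s M,
      Finset.sum_Ico_eq_sub _ (by omega : M - 1 ≤ N - 1)]
    ring
  rw [hident]
  have hEf : ∀ K : ℕ, ‖E a K * f s K‖ ≤ B a * (K:ℝ) ^ (-s.re) := by
    intro K
    rw [norm_mul, norm_f hσ]
    exact mul_le_mul_of_nonneg_right (norm_E_le a hz1 K) (Real.rpow_nonneg (Nat.cast_nonneg K) _)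
  have hsum : ‖∑ k ∈ Finset.Ico (M - 1) (N - 1), g a s k‖
      ≤ (B a * (‖s‖ / s.re)) * (M:ℝ) ^ (-s.re) := by
    calc ‖∑ k ∈ Finset.Ico (M - 1) (N - 1), g a s k‖
        ≤ ∑ k ∈ Finset.Ico (M - 1) (N - 1), ‖g a s k‖ := norm_sum_le _ _
      _ ≤ ∑ k ∈ Finset.Ico (M - 1) (N - 1), (B a * (‖s‖ / s.re)) * (u s k - u s (k + 1)) :=
          Finset.sum_le_sum (fun k _ => norm_g_le hz1 hσ k)
      _ = (B a * (‖s‖ / s.re)) * (u s (M - 1) - u s (N - 1)) := by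
          rw [← Finset.mul_sum, sum_Ico_tele (u s) (by omega : M - 1 ≤ N - 1)]
      _ ≤ (B a * (‖s‖ / s.re)) * u s (M - 1) := by
          have h1 : 0 ≤ u s (N - 1) := u_nonneg s _
          have h2 : 0 ≤ B a * (‖s‖ / s.re) := by
            apply mul_nonneg (B_nonneg a)
            positivity
          nlinarith
      _ = (B a * (‖s‖ / s.re)) * (M:ℝ) ^ (-s.re) := by
          rw [u]
          congr 2
          have : ((M - 1 : ℕ) : ℝ) = (M : ℝ) - 1 := by
            rw [Nat.cast_sub h1M]; simp
          rw [this]; ring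
  calc ‖E a N * f s N - E a M * f s M + ∑ k ∈ Finset.Ico (M - 1) (N - 1), g a s k‖
      ≤ ‖E a N * f s N‖ + ‖E a M * f s M‖ + ‖∑ k ∈ Finset.Ico (M - 1) (N - 1), g a s k‖ := by
        refine le_trans (norm_add_le _ _) ?_
        gcongr
        exact norm_sub_le _ _
    _ ≤ B a * (N:ℝ) ^ (-s.re) + B a * (M:ℝ) ^ (-s.re) + (B a * (‖s‖ / s.re)) * (M:ℝ) ^ (-s.re) := by
        exact add_le_add (add_le_add (hEf N) (hEf M)) hsum
    _ = B a * ((N:ℝ) ^ (-s.re) + (M:ℝ) ^ (-s.re) + (‖s‖ / s.re) * (M:ℝ) ^ (-s.re)) := by ring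

noncomputable def Cconst (s : ℂ) : ℝ := 2 / (1 - s.re) + 2 + ‖s‖ / s.re

lemma norm_T_le {s : ℂ} (hσ0 : 0 < s.re) (hσ1 : s.re < 1) {a : ℝ}
    (ha : a ∈ Set.Ioo (0:ℝ) 1) (N : ℕ) :
    ‖T a s N‖ ≤ Cconst s * (min a (1 - a)) ^ (s.re - 1) := by
  have hz1 := z_ne_one ha
  set m := min a (1 - a) with hm
  have hm0 : 0 < m := lt_min ha.1 (by linarith [ha.2])
  have hm2 : m ≤ 1 / 2 := by
    rcases le_total a (1/2) with h | h
    · exact le_trans (min_le_left _ _) h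
    · exact le_trans (min_le_right _ _) (by linarith)
  set M : ℕ := ⌈1 / m⌉₊ with hM
  have hMm : 1 / m ≤ (M : ℝ) := Nat.le_ceil _
  have h1m : (2:ℝ) ≤ 1 / m := by
    rw [le_div_iff₀ hm0]; linarith
  have hM1 : 1 ≤ M := by
    have : (1:ℝ) ≤ (M:ℝ) := by linarith
    exact_mod_cast this
  have hMup : (M : ℝ) ≤ 2 / m := by
    have := Nat.ceil_lt_add_one (by positivity : (0:ℝ) ≤ 1 / m)
    have h2 : 1 / m + 1 ≤ 2 / m := by
      rw [div_add' _ _ _ hm0.ne', div_le_div_iff_of_pos_right hm0]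
      linarith
    linarith
  have hB : B a ≤ 1 / m := by
    have h1 := B_le ha
    have h2 := sin_lower ha
    have h3 := sin_pi_mul_pos ha
    have h4 : 1 / Real.sin (π * a) ≤ 1 / (2 * m) := by
      apply div_le_div_of_nonneg_left (by norm_num) (by positivity) h2
    have h5 : 1 / (2 * m) + 1 ≤ 1 / m := by
      rw [div_add' _ _ _ (by positivity : (2*m) ≠ 0)]
      rw [div_le_div_iff₀ (by positivity) hm0]
      nlinarith
    linarith
  -- small partial sums
  have hsmall : ∀ K : ℕ, K ≤ M → ‖T a s K‖ ≤ (M:ℝ) ^ (1 - s.re) / (1 - s.re) := by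
    intro K hK
    calc ‖T a s K‖ ≤ ∑ k ∈ Finset.Icc 1 K, ‖z a ^ k * f s k‖ := norm_sum_le _ _
      _ = ∑ k ∈ Finset.Icc 1 K, (k:ℝ) ^ (-s.re) := by
          apply Finset.sum_congr rfl
          intro k _
          rw [norm_mul, norm_pow, abs_z, one_pow, one_mul, norm_f hσ0]
      _ ≤ ∑ k ∈ Finset.Icc 1 M, (k:ℝ) ^ (-s.re) := by
          apply Finset.sum_le_sum_of_subset_of_nonneg
          · exact Finset.Icc_subset_Icc_right hK
          · intro k _ _
            exact Real.rpow_nonneg (Nat.cast_nonneg k) _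
      _ ≤ (M:ℝ) ^ (1 - s.re) / (1 - s.re) := sum_rpow_le hσ0 hσ1 M
  have hmpow : (0:ℝ) < m ^ (s.re - 1) := Real.rpow_pos_of_pos hm0 _
  have hMbound : (M:ℝ) ^ (1 - s.re) / (1 - s.re) ≤ 2 * m ^ (s.re - 1) / (1 - s.re) := by
    apply div_le_div_of_nonneg_right ?_ (by linarith)
    calc (M:ℝ) ^ (1 - s.re) ≤ (2 / m) ^ (1 - s.re) :=
          Real.rpow_le_rpow (Nat.cast_nonneg M) hMup (by linarith)
      _ = 2 ^ (1 - s.re) * (1 / m) ^ (1 - s.re) := by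
          rw [← Real.mul_rpow (by norm_num) (by positivity)]
          congr 1
          field_simp
      _ ≤ 2 * (1 / m) ^ (1 - s.re) := by
          apply mul_le_mul_of_nonneg_right ?_ (Real.rpow_nonneg (by positivity) _)
          calc (2:ℝ) ^ (1 - s.re) ≤ 2 ^ (1:ℝ) :=
                Real.rpow_le_rpow_of_exponent_le (by norm_num) (by linarith)
            _ = 2 := by norm_num
      _ = 2 * m ^ (s.re - 1) := by
          congr 1
          rw [one_div, ← Real.rpow_neg_one m, ← Real.rpow_mul hm0.le,
            show (-1:ℝ) * (1 - s.re) = s.re - 1 by ring]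
  have hCm : 0 ≤ ‖s‖ / s.re := by positivity
  rcases le_or_gt N M with hNM | hNM
  · calc ‖T a s N‖ ≤ (M:ℝ) ^ (1 - s.re) / (1 - s.re) := hsmall N hNM
      _ ≤ 2 * m ^ (s.re - 1) / (1 - s.re) := hMbound
      _ ≤ Cconst s * m ^ (s.re - 1) := by
          rw [Cconst]
          have h1 : 2 * m ^ (s.re - 1) / (1 - s.re) = (2 / (1 - s.re)) * m ^ (s.re - 1) := by ring
          rw [h1]
          nlinarith [hmpow, hCm]
  · have hTM := hsmall M le_rfl
    have hTsub := norm_T_sub_le hz1 hσ0 hM1 hNM.le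
    have hNm : (N:ℝ) ^ (-s.re) ≤ (M:ℝ) ^ (-s.re) := by
      apply Real.rpow_le_rpow_of_nonpos (by exact_mod_cast hM1) (by exact_mod_cast hNM.le)
        (by linarith)
    have hMσ : (M:ℝ) ^ (-s.re) ≤ m ^ s.re := by
      have h1 : (M:ℝ) ^ (-s.re) ≤ (1/m) ^ (-s.re) :=
        Real.rpow_le_rpow_of_nonpos (by positivity) hMm (by linarith)
      have h2 : ((1:ℝ)/m) ^ (-s.re) = m ^ s.re := by
        rw [one_div, ← Real.rpow_neg_one m, ← Real.rpow_mul hm0.le]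
        rw [show (-1:ℝ) * -s.re = s.re by ring]
      linarith [h2 ▸ h1]
    have hBM : B a * (M:ℝ) ^ (-s.re) ≤ m ^ (s.re - 1) := by
      have : (1/m) * m ^ s.re = m ^ (s.re - 1) := by
        rw [Real.rpow_sub hm0, Real.rpow_one]
        ring
      rw [← this]
      apply mul_le_mul hB hMσ (Real.rpow_nonneg (Nat.cast_nonneg M) _) (by positivity)
    calc ‖T a s N‖ ≤ ‖T a s M‖ + ‖T a s N - T a s M‖ := by
          have := norm_add_le (T a s M) (T a s N - T a s M)
          simpa using this
      _ ≤ (M:ℝ) ^ (1 - s.re) / (1 - s.re)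
          + B a * ((N:ℝ) ^ (-s.re) + (M:ℝ) ^ (-s.re) + (‖s‖ / s.re) * (M:ℝ) ^ (-s.re)) := by
          gcongr
      _ ≤ 2 * m ^ (s.re - 1) / (1 - s.re)
          + (B a * (M:ℝ) ^ (-s.re)) * (2 + ‖s‖ / s.re) := by
          refine add_le_add hMbound ?_
          have hBa := B_nonneg a
          have h1 : B a * ((N:ℝ) ^ (-s.re) + (M:ℝ) ^ (-s.re) + (‖s‖ / s.re) * (M:ℝ) ^ (-s.re))
              ≤ B a * ((M:ℝ) ^ (-s.re) + (M:ℝ) ^ (-s.re) + (‖s‖ / s.re) * (M:ℝ) ^ (-s.re)) := by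
            apply mul_le_mul_of_nonneg_left ?_ hBa
            have := mul_le_mul_of_nonneg_left hNm hCm
            linarith
          calc B a * ((N:ℝ) ^ (-s.re) + (M:ℝ) ^ (-s.re) + (‖s‖ / s.re) * (M:ℝ) ^ (-s.re))
              ≤ B a * ((M:ℝ) ^ (-s.re) + (M:ℝ) ^ (-s.re) + (‖s‖ / s.re) * (M:ℝ) ^ (-s.re)) := h1
            _ = (B a * (M:ℝ) ^ (-s.re)) * (2 + ‖s‖ / s.re) := by ring
      _ ≤ Cconst s * m ^ (s.re - 1) := by
          rw [Cconst]
          have h2 : (B a * (M:ℝ) ^ (-s.re)) * (2 + ‖s‖ / s.re)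
              ≤ m ^ (s.re - 1) * (2 + ‖s‖ / s.re) := by
            apply mul_le_mul_of_nonneg_right hBM (by positivity)
          have h3 : 2 * m ^ (s.re - 1) / (1 - s.re) = (2 / (1 - s.re)) * m ^ (s.re - 1) := by
            ring
          nlinarith [hmpow]

noncomputable def Dom (s : ℂ) (a : ℝ) : ℝ := Cconst s * (a ^ (s.re - 1) + (1 - a) ^ (s.re - 1))

lemma Cconst_nonneg {s : ℂ} (hσ0 : 0 < s.re) (hσ1 : s.re < 1) : 0 ≤ Cconst s := by
  rw [Cconst]
  have h1 : (0:ℝ) ≤ 2 / (1 - s.re) := div_nonneg (by norm_num) (by linarith)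
  have h2 : (0:ℝ) ≤ ‖s‖ / s.re := by positivity
  linarith

lemma norm_T_le_Dom {s : ℂ} (hσ0 : 0 < s.re) (hσ1 : s.re < 1) {a : ℝ}
    (ha : a ∈ Set.Ioo (0:ℝ) 1) (N : ℕ) : ‖T a s N‖ ≤ Dom s a := by
  refine le_trans (norm_T_le hσ0 hσ1 ha N) ?_
  rw [Dom]
  apply mul_le_mul_of_nonneg_left ?_ (Cconst_nonneg hσ0 hσ1)
  rcases le_total a (1 - a) with h | h
  · rw [min_eq_left h]
    have : (0:ℝ) ≤ (1 - a) ^ (s.re - 1) := Real.rpow_nonneg (by linarith [ha.2]) _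
    linarith
  · rw [min_eq_right h]
    have : (0:ℝ) ≤ a ^ (s.re - 1) := Real.rpow_nonneg ha.1.le _
    linarith

lemma integrable_Dom {s : ℂ} (hσ0 : 0 < s.re) (hσ1 : s.re < 1) :
    IntegrableOn (Dom s) (Set.Ioo (0:ℝ) 1) := by
  have h1 : IntervalIntegrable (fun x : ℝ => x ^ (s.re - 1)) volume 0 1 :=
    intervalIntegral.intervalIntegrable_rpow' (by linarith)
  have h2 : IntervalIntegrable (fun x : ℝ => (1 - x) ^ (s.re - 1)) volume 0 1 := by
    have := (h1.comp_sub_left 1).symm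
    simpa using this
  have h3 := (h1.add h2).const_mul (Cconst s)
  have h4 : IntegrableOn (fun x : ℝ => Cconst s * (x ^ (s.re - 1) + (1 - x) ^ (s.re - 1)))
      (Set.Ioc (0:ℝ) 1) := by
    rw [← intervalIntegrable_iff_integrableOn_Ioc_of_le zero_le_one]
    exact h3
  exact (h4.mono_set Set.Ioo_subset_Ioc_self).congr_fun (fun x _ => rfl) measurableSet_Ioo

lemma continuous_z : Continuous z := by
  apply Complex.continuous_exp.comp
  exact continuous_const.mul Complex.continuous_ofReal

lemma continuous_T (s : ℂ) (N : ℕ) : Continuous (fun a => T a s N) := by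
  apply continuous_finset_sum
  intro k _
  exact (continuous_z.pow k).mul continuous_const

lemma continuous_e (k : ℤ) : Continuous (fun a : ℝ => Complex.exp (-(2 * π * Complex.I * k * a))) := by
  apply Complex.continuous_exp.comp
  apply Continuous.neg
  exact continuous_const.mul Complex.continuous_ofReal

lemma norm_e (k : ℤ) (a : ℝ) : ‖Complex.exp (-(2 * π * Complex.I * k * a))‖ = 1 := by
  rw [Complex.norm_exp]
  have : (-(2 * ↑π * Complex.I * (k:ℂ) * (a:ℂ))).re = 0 := by simp
  rw [this, Real.exp_zero]

lemma integral_exp_int (n : ℤ) :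
    (∫ a in Set.Ioo (0:ℝ) 1, Complex.exp (2 * π * Complex.I * n * a))
      = if n = 0 then 1 else 0 := by
  rw [← integral_Ioc_eq_integral_Ioo, ← intervalIntegral.integral_of_le zero_le_one]
  rcases eq_or_ne n 0 with h | h
  · subst h
    simp
  · rw [if_neg h]
    have hc : (2 * (π:ℂ) * Complex.I * n : ℂ) ≠ 0 := by
      simp [Real.pi_ne_zero, Complex.I_ne_zero, h]
    rw [intervalIntegral.integral_congr (g := fun a : ℝ => Complex.exp ((2 * π * Complex.I * n) * a))
      (fun x _ => rfl)]
    rw [integral_exp_mul_complex hc]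
    have : Complex.exp (2 * ↑π * Complex.I * ↑n * (1:ℝ)) = 1 := by
      rw [show (2 * ↑π * Complex.I * (n:ℂ) * ((1:ℝ):ℂ)) = (n:ℂ) * (2 * ↑π * Complex.I) by
        push_cast; ring]
      exact Complex.exp_int_mul_two_pi_mul_I n
    rw [this]
    simp

lemma integral_T_mul {s : ℂ} (hσ0 : 0 < s.re) (N : ℕ) (k : ℤ) :
    (∫ a in Set.Ioo (0:ℝ) 1, T a s N * Complex.exp (-(2 * π * Complex.I * k * a)))
      = if 1 ≤ k ∧ k ≤ (N:ℤ) then ((k:ℂ)) ^ (-s) else 0 := by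
  have hint : ∀ j : ℕ, IntegrableOn
      (fun a : ℝ => z a ^ j * f s j * Complex.exp (-(2 * π * Complex.I * k * a)))
      (Set.Ioo (0:ℝ) 1) := by
    intro j
    apply (Continuous.integrableOn_Icc ?_).mono_set Set.Ioo_subset_Icc_self
    exact ((continuous_z.pow j).mul continuous_const).mul (continuous_e k)
  have hexp : ∀ j : ℕ, ∀ a : ℝ, z a ^ j * Complex.exp (-(2 * π * Complex.I * k * a))
      = Complex.exp (2 * π * Complex.I * ((j : ℤ) - k : ℤ) * a) := by
    intro j a
    rw [z, ← Complex.exp_nat_mul, ← Complex.exp_add]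
    congr 1
    push_cast
    ring
  calc (∫ a in Set.Ioo (0:ℝ) 1, T a s N * Complex.exp (-(2 * π * Complex.I * k * a)))
      = ∫ a in Set.Ioo (0:ℝ) 1, ∑ j ∈ Finset.Icc 1 N,
          z a ^ j * f s j * Complex.exp (-(2 * π * Complex.I * k * a)) := by
        apply setIntegral_congr_fun measurableSet_Ioo
        intro a _
        simp only [T, Finset.sum_mul]
    _ = ∑ j ∈ Finset.Icc 1 N, ∫ a in Set.Ioo (0:ℝ) 1,
          z a ^ j * f s j * Complex.exp (-(2 * π * Complex.I * k * a)) := by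
        exact integral_finset_sum _ (fun j _ => hint j)
    _ = ∑ j ∈ Finset.Icc 1 N, f s j * (if ((j:ℤ) - k) = 0 then 1 else 0) := by
        apply Finset.sum_congr rfl
        intro j _
        rw [← integral_exp_int ((j:ℤ) - k)]
        rw [← MeasureTheory.integral_const_mul]
        apply setIntegral_congr_fun measurableSet_Ioo
        intro a _
        show z a ^ j * f s j * Complex.exp (-(2 * π * Complex.I * k * a))
          = f s j * Complex.exp (2 * π * Complex.I * ((j : ℤ) - k : ℤ) * a)
        rw [show z a ^ j * f s j * Complex.exp (-(2 * π * Complex.I * k * a))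
          = f s j * (z a ^ j * Complex.exp (-(2 * π * Complex.I * k * a))) by ring, hexp j a]
    _ = if 1 ≤ k ∧ k ≤ (N:ℤ) then ((k:ℂ)) ^ (-s) else 0 := by
        rcases Classical.em (1 ≤ k ∧ k ≤ (N:ℤ)) with h | h
        · rw [if_pos h]
          obtain ⟨hk1, hkN⟩ := h
          have hmem : k.toNat ∈ Finset.Icc 1 N := by
            simp only [Finset.mem_Icc]
            omega
          rw [Finset.sum_eq_single_of_mem k.toNat hmem]
          · rw [if_pos (by omega), mul_one, f]
            congr 1
            have h5 : ((k.toNat : ℕ) : ℤ) = k := Int.toNat_of_nonneg (by omega)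
            exact_mod_cast h5
          · intro j _ hj
            rw [if_neg (by omega), mul_zero]
        · rw [if_neg h]
          apply Finset.sum_eq_zero
          intro j hj
          simp only [Finset.mem_Icc] at hj
          rw [if_neg (by omega), mul_zero]

end PZAux

/-- The periodized zeta function `F s a`, i.e. the analytic continuation in `s` of
`∑ k ≥ 1, exp (2πika) / k ^ s`, realized as Mathlib's `expZeta` at the point `a` of the
unit additive circle. -/
noncomputable def periodizedZeta (s : ℂ) (a : ℝ) : ℂ := HurwitzZeta.expZeta (a : UnitAddCircle) s


/-- for `0 < Re s < 1` and `|Im s| > 1`, `F_s` is integrable on `(0,1)` and its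
Fourier coefficients are `k^{-s}` for `k ≥ 1` and `0` for `k ≤ 0`. -/
theorem periodizedZeta_fourierCoeff (s : ℂ) (hσ0 : 0 < s.re) (hσ1 : s.re < 1)
    (ht : 1 < |s.im|) :
    MeasureTheory.IntegrableOn (periodizedZeta s) (Set.Ioo (0 : ℝ) 1) ∧
    (∀ k : ℤ, 1 ≤ k →
      (∫ a in Set.Ioo (0 : ℝ) 1, periodizedZeta s a * Complex.exp (-(2 * π * Complex.I * k * a)))
        = (k : ℂ) ^ (-s)) ∧
    (∀ k : ℤ, k ≤ 0 →
      (∫ a in Set.Ioo (0 : ℝ) 1, periodizedZeta s a * Complex.exp (-(2 * π * Complex.I * k * a)))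
        = 0) := by
  open PZAux in
  -- pointwise convergence of partial sums to periodizedZeta on (0,1)
  have hG : ∀ a ∈ Set.Ioo (0:ℝ) 1,
      Filter.Tendsto (PZAux.T a s) Filter.atTop (nhds (periodizedZeta s a)) := by
    intro a ha
    rw [periodizedZeta, PZAux.expZeta_eq_G ha hσ0]
    exact PZAux.tendsto_T_G (PZAux.z_ne_one ha) hσ0
  have hμ : ∀ᵐ a ∂(volume.restrict (Set.Ioo (0:ℝ) 1)),
      Filter.Tendsto (PZAux.T a s) Filter.atTop (nhds (periodizedZeta s a)) :=
    (ae_restrict_iff' measurableSet_Ioo).mpr (ae_of_all _ hG)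
  have hTmeas : ∀ N : ℕ, AEStronglyMeasurable (fun a => PZAux.T a s N)
      (volume.restrict (Set.Ioo (0:ℝ) 1)) :=
    fun N => (PZAux.continuous_T s N).aestronglyMeasurable.restrict
  have hZmeas : AEStronglyMeasurable (periodizedZeta s) (volume.restrict (Set.Ioo (0:ℝ) 1)) :=
    aestronglyMeasurable_of_tendsto_ae Filter.atTop hTmeas hμ
  have hDomInt : Integrable (PZAux.Dom s) (volume.restrict (Set.Ioo (0:ℝ) 1)) :=
    PZAux.integrable_Dom hσ0 hσ1
  have hbound : ∀ᵐ a ∂(volume.restrict (Set.Ioo (0:ℝ) 1)),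
      ‖periodizedZeta s a‖ ≤ PZAux.Dom s a := by
    refine (ae_restrict_iff' measurableSet_Ioo).mpr (ae_of_all _ ?_)
    intro a ha
    apply le_of_tendsto (hG a ha).norm
    exact Filter.Eventually.of_forall (fun N => PZAux.norm_T_le_Dom hσ0 hσ1 ha N)
  have hint : IntegrableOn (periodizedZeta s) (Set.Ioo (0:ℝ) 1) :=
    Integrable.mono' hDomInt hZmeas hbound
  refine ⟨hint, ?_, ?_⟩ <;> intro k hk
  all_goals {
    have hDC := MeasureTheory.tendsto_integral_of_dominated_convergence
      (μ := volume.restrict (Set.Ioo (0:ℝ) 1))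
      (F := fun N a => PZAux.T a s N * Complex.exp (-(2 * π * Complex.I * k * a)))
      (f := fun a => periodizedZeta s a * Complex.exp (-(2 * π * Complex.I * k * a)))
      (PZAux.Dom s)
      (fun N => (hTmeas N).mul (PZAux.continuous_e k).aestronglyMeasurable.restrict)
      hDomInt
      (fun N => by
        refine (ae_restrict_iff' measurableSet_Ioo).mpr (ae_of_all _ ?_)
        intro a ha
        rw [norm_mul, PZAux.norm_e, mul_one]
        exact PZAux.norm_T_le_Dom hσ0 hσ1 ha N)
      (by
        filter_upwards [hμ] with a htend
        exact htend.mul tendsto_const_nhds)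
    first
    | · -- k ≥ 1
        have hconst : Filter.Tendsto
            (fun N => ∫ a in Set.Ioo (0:ℝ) 1,
              PZAux.T a s N * Complex.exp (-(2 * π * Complex.I * k * a)))
            Filter.atTop (nhds ((k:ℂ) ^ (-s))) := by
          apply Filter.Tendsto.congr' ?_ tendsto_const_nhds
          filter_upwards [Filter.eventually_ge_atTop k.toNat] with N hN
          rw [PZAux.integral_T_mul hσ0 N k, if_pos ⟨hk, by omega⟩]
        exact tendsto_nhds_unique hDC hconst
    | · -- k ≤ 0
        have hconst : Filter.Tendsto
            (fun N => ∫ a in Set.Ioo (0:ℝ) 1,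
              PZAux.T a s N * Complex.exp (-(2 * π * Complex.I * k * a)))
            Filter.atTop (nhds (0:ℂ)) := by
          apply Filter.Tendsto.congr' ?_ tendsto_const_nhds
          filter_upwards with N
          rw [PZAux.integral_T_mul hσ0 N k, if_neg (by omega)]
        exact tendsto_nhds_unique hDC hconst
  }
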